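/- arXiv:2203.03255 — 5 statements merged into one kernel-verified Lean document; each statement's English description precedes it below -/
import Mathlib

section
/- Let R be a ring, M a left R-module, and r_j·x = m_j (j ∈ J, r_j ∈ R, m_j ∈ M) a finitely solvable system of equations in one unknown x. Then there exists a left R-module B, an injective R-homomorphism α : M → B whose image α(M) is a pure submodule of B, and an element b ∈ B such that r_j·b = α(m_j) for all j ∈ J and B = α(M) + R·b (so B/α(M) is cyclic). -/
/-- A submodule `A` of `B` is *pure* if every finite system of linear equations
`∑ i, r j i • x i = a j` with constants in `A` that is solvable in `B` is solvable in `A`. -/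
def IsPureSubmodule {R : Type*} [Ring R] {B : Type*} [AddCommGroup B] [Module R B]
    (A : Submodule R B) : Prop :=
  ∀ (m n : ℕ) (r : Fin m → Fin n → R) (a : Fin m → A),
    (∃ x : Fin n → B, ∀ j, ∑ i, r j i • x i = (a j : B)) →
    ∃ x : Fin n → A, ∀ j, ∑ i, r j i • ((x i : B)) = (a j : B)

universe u v w

/-- Given a finitely solvable system of equations `r j • x = m j` (`j ∈ J`) in one unknown
over a left `R`-module `M`, there is a single pure extension `B` of `M` (i.e. `M` embeds in
`B` as a pure submodule with cyclic quotient) in which the system has a solution. -/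
theorem exists_single_pure_extension_with_solution (R : Type u) [Ring R]
    (M : Type v) [AddCommGroup M] [Module R M] (J : Type w) (r : J → R) (m : J → M)
    (hfs : ∀ s : Finset J, ∃ z : M, ∀ j ∈ s, r j • z = m j) :
    ∃ (B : Type (max u v)) (_ : AddCommGroup B) (_ : Module R B)
      (α : M →ₗ[R] B) (b : B),
      Function.Injective α ∧ IsPureSubmodule (LinearMap.range α) ∧
      (∀ j : J, r j • b = α (m j)) ∧
      (∀ x : B, ∃ (y : M) (s : R), x = α y + s • b) := by
  classical
  set S : Submodule R (R × M) :=
    Submodule.span R (Set.range fun j => ((-(r j), m j) : R × M)) with hS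
  -- key lemma: any finite family of elements of `S` can be "resolved" by a single `z`.
  have key : ∀ (n : ℕ) (t : Fin n → R) (x : Fin n → M),
      (∀ j, ((t j, x j) : R × M) ∈ S) → ∃ z : M, ∀ j, t j • z = - x j := by
    intro n t x hmem
    have hmem' : ∀ j, ∃ c : J →₀ R,
        (c.sum fun i a => a • ((-(r i), m i) : R × M)) = (t j, x j) := by
      intro j
      exact (Finsupp.mem_span_range_iff_exists_finsupp).1 (hmem j)
    choose c hc using hmem'
    obtain ⟨z, hz⟩ := hfs (Finset.univ.biUnion fun j => (c j).support)
    refine ⟨z, fun j => ?_⟩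
    have hfst : t j = ∑ i ∈ (c j).support, c j i * (-(r i)) := by
      have h := congrArg Prod.fst (hc j).symm
      simpa [Finsupp.sum, Prod.fst_sum, smul_eq_mul] using h
    have hsnd : x j = ∑ i ∈ (c j).support, c j i • m i := by
      have h := congrArg Prod.snd (hc j).symm
      simpa [Finsupp.sum, Prod.snd_sum] using h
    have hzi : ∀ i ∈ (c j).support, r i • z = m i := by
      intro i hi
      exact hz i (Finset.mem_biUnion.2 ⟨j, Finset.mem_univ j, hi⟩)
    calc t j • z = ∑ i ∈ (c j).support, (c j i * (-(r i))) • z := by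
          rw [hfst, Finset.sum_smul]
      _ = ∑ i ∈ (c j).support, -(c j i • m i) := by
          refine Finset.sum_congr rfl fun i hi => ?_
          rw [mul_smul, neg_smul, hzi i hi, smul_neg]
      _ = - x j := by rw [Finset.sum_neg_distrib, hsnd]
  refine ⟨(R × M) ⧸ S, inferInstance, inferInstance,
    S.mkQ.comp (LinearMap.inr R R M), S.mkQ (1, 0), ?_, ?_, ?_, ?_⟩
  · -- injectivity
    intro x y h
    have hmem : ((0 : R), x - y) ∈ S := by
      have h' : S.mkQ (0, x) = S.mkQ (0, y) := h
      have := (Submodule.Quotient.eq S).1 h'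
      simpa using this
    obtain ⟨z, hz⟩ := key 1 (fun _ => (0 : R)) (fun _ => x - y) (fun _ => hmem)
    have h0 := hz 0
    simp only [zero_smul] at h0
    exact sub_eq_zero.1 (neg_eq_zero.1 h0.symm)
  · -- purity
    intro meq n rr a ⟨xx, hxx⟩
    choose p hp using fun i => S.mkQ_surjective (xx i)
    have ha' : ∀ j, ∃ y : M, (S.mkQ.comp (LinearMap.inr R R M)) y = (a j : (R × M) ⧸ S) := by
      intro j
      exact LinearMap.mem_range.1 (a j).2
    choose a' ha' using ha'
    have hmem : ∀ j, ((∑ i, rr j i * (p i).1, (∑ i, rr j i • (p i).2) - a' j) : R × M) ∈ S := by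
      intro j
      have h1 : S.mkQ (∑ i, rr j i • p i) = S.mkQ ((0 : R), a' j) := by
        rw [map_sum]
        calc ∑ i, S.mkQ (rr j i • p i) = ∑ i, rr j i • xx i := by
              refine Finset.sum_congr rfl fun i _ => ?_
              rw [map_smul, hp i]
          _ = (a j : (R × M) ⧸ S) := hxx j
          _ = S.mkQ ((0 : R), a' j) := (ha' j).symm
      have h2 := (Submodule.Quotient.eq S).1 h1
      simpa [Prod.smul_def, Prod.fst_sum, Prod.snd_sum, smul_eq_mul, Prod.sub_def] using h2
    obtain ⟨z, hz⟩ := key meq (fun j => ∑ i, rr j i * (p i).1)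
      (fun j => (∑ i, rr j i • (p i).2) - a' j) hmem
    refine ⟨fun i => ⟨(S.mkQ.comp (LinearMap.inr R R M)) ((p i).2 + (p i).1 • z),
      LinearMap.mem_range.2 ⟨_, rfl⟩⟩, fun j => ?_⟩
    have hzj : (∑ i, rr j i * (p i).1) • z = a' j - ∑ i, rr j i • (p i).2 := by
      have := hz j; rw [this]; abel
    calc ∑ i, rr j i • ((S.mkQ.comp (LinearMap.inr R R M)) ((p i).2 + (p i).1 • z))
        = (S.mkQ.comp (LinearMap.inr R R M)) (∑ i, rr j i • ((p i).2 + (p i).1 • z)) := by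
          rw [map_sum]
          exact Finset.sum_congr rfl fun i _ => (map_smul _ _ _).symm
      _ = (S.mkQ.comp (LinearMap.inr R R M))
            ((∑ i, rr j i • (p i).2) + (∑ i, rr j i * (p i).1) • z) := by
          congr 1
          simp only [smul_add, ← mul_smul]
          rw [Finset.sum_add_distrib, Finset.sum_smul]
      _ = (S.mkQ.comp (LinearMap.inr R R M)) (a' j) := by
          rw [hzj]; congr 1; abel
      _ = (a j : (R × M) ⧸ S) := ha' j
  · -- solvability of the original system
    intro j
    have : S.mkQ (r j • ((1 : R), (0 : M))) = S.mkQ ((0 : R), m j) := by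
      simp only [Submodule.mkQ_apply]
      rw [Submodule.Quotient.eq]
      have hgen : ((-(r j), m j) : R × M) ∈ S :=
        Submodule.subset_span ⟨j, rfl⟩
      have := S.neg_mem hgen
      simpa [Prod.smul_def, smul_eq_mul, Prod.sub_def, Prod.neg_mk] using this
    calc r j • S.mkQ ((1 : R), (0 : M)) = S.mkQ (r j • ((1 : R), (0 : M))) := (map_smul _ _ _).symm
      _ = S.mkQ ((0 : R), m j) := this
  · -- cyclic quotient
    intro x
    obtain ⟨⟨s, y⟩, rfl⟩ := S.mkQ_surjective x
    refine ⟨y, s, ?_⟩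
    have : ((s, y) : R × M) = ((0 : R), y) + s • ((1 : R), (0 : M)) := by
      simp [Prod.smul_def, smul_eq_mul]
    rw [this, map_add, map_smul]
    rfl
end

section
/- Let R be a ring and M a left R-module. The following conditions are equivalent: (1) the countable direct sum M^(ℕ) is semi-compact; (2) the set of left ideals of R of the form ^⊥X = {r ∈ R | r·x = 0 for all x ∈ X}, X a subset of M, satisfies the ascending chain condition; (3) M satisfies the descending chain condition on the subgroups M[I] where I ranges over the finitely generated left ideals of R; (4) M is Σ-semi-compact, i.e. every direct sum of copies of M (indexed by an arbitrary set) is semi-compact. -/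
/-- A left `R`-module `M` is *semi-compact* if every finitely solvable family of congruences
`x ≡ x α (mod M[I α])` (`x α ∈ M`, `I α` a left ideal of `R`), i.e. a family such that every
finite subfamily has a common solution, has a simultaneous solution in `M`.
Here `y ≡ x α (mod M[I α])` is expressed as `∀ r ∈ I α, r • y = r • x α`. -/
def IsSemiCompact (R : Type*) [Ring R] (M : Type*) [AddCommGroup M] [Module R M] : Prop :=
  ∀ (Λ : Type*) (x : Λ → M) (I : Λ → Ideal R),
    (∀ s : Finset Λ, ∃ y : M, ∀ α ∈ s, ∀ r ∈ I α, r • y = r • x α) →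
    ∃ y : M, ∀ (α : Λ), ∀ r ∈ I α, r • y = r • x α

/-- `M` is *Σ-semi-compact* if every direct sum of copies of `M` (here realized as
`ι →₀ M` for an arbitrary index type `ι`) is semi-compact. -/
def IsSigmaSemiCompact.{s, u, v, w} (R : Type u) [Ring R] (M : Type v)
    [AddCommGroup M] [Module R M] : Prop :=
  ∀ ι : Type w, IsSemiCompact.{u, max v w, s} R (ι →₀ M)

open Function

section Aux
variable (R : Type*) [Ring R] {M : Type*} [AddCommGroup M] [Module R M]

/-- The annihilator left ideal of a set. -/
def annSet (X : Set M) : Ideal R :=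
  ⨅ x ∈ X, LinearMap.ker (LinearMap.toSpanSingleton R M x)

lemma mem_annSet {X : Set M} {r : R} : r ∈ annSet R X ↔ ∀ x ∈ X, r • x = 0 := by
  simp [annSet, Submodule.mem_iInf, LinearMap.mem_ker, LinearMap.toSpanSingleton_apply]

variable (M) in
/-- `M[I]`: the subgroup of elements annihilated by `I`. -/
def torSub (I : Ideal R) : AddSubgroup M where
  carrier := {y : M | ∀ r ∈ I, r • y = 0}
  add_mem' := by
    intro a b ha hb r hr
    rw [smul_add, ha r hr, hb r hr, add_zero]
  zero_mem' := fun r _ => smul_zero r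
  neg_mem' := by
    intro a ha r hr
    rw [smul_neg, ha r hr, neg_zero]

lemma mem_torSub {I : Ideal R} {y : M} : y ∈ torSub R M I ↔ ∀ r ∈ I, r • y = 0 := Iff.rfl

lemma torSub_anti {I J : Ideal R} (h : I ≤ J) : torSub R M J ≤ torSub R M I :=
  fun _ hy r hr => hy r (h hr)

end Aux

section Extract
variable {R : Type*} [Ring R] {M : Type*} [AddCommGroup M] [Module R M]

lemma extract_data (f : ℕ → Ideal R)
    (hann : ∀ n, ∃ X : Set M, (f n : Set R) = {r : R | ∀ x ∈ X, r • x = 0})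
    (hmono : Monotone f) (hns : ¬ ∃ n, ∀ k, n ≤ k → f k = f n) :
    ∃ (F : ℕ → Ideal R) (x : ℕ → M) (r : ℕ → R), Monotone F ∧
      (∀ j, r j ∈ F (j+1)) ∧ (∀ j, r j • x j ≠ 0) ∧ (∀ j, ∀ s ∈ F j, s • x j = 0) := by
  push_neg at hns
  choose k hk hne using hns
  let φ : ℕ → ℕ := fun n => Nat.rec 0 (fun _ m => k m) n
  have hφstep : ∀ j, φ (j+1) = k (φ j) := fun j => rfl
  have hφmono : Monotone φ := monotone_nat_of_le_succ (fun j => by rw [hφstep]; exact hk _)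
  have hlt : ∀ j, f (φ j) < f (φ (j+1)) := by
    intro j
    rw [hφstep]
    exact lt_of_le_of_ne (hmono (hk _)) (Ne.symm (hne _))
  have hselect : ∀ j, ∃ r : R, r ∈ f (φ (j+1)) ∧ r ∉ f (φ j) := by
    intro j
    obtain ⟨r, hr1, hr2⟩ := SetLike.exists_of_lt (hlt j)
    exact ⟨r, hr1, hr2⟩
  choose r hr1 hr2 using hselect
  choose X hX using hann
  have hx : ∀ j, ∃ x ∈ X (φ j), r j • x ≠ 0 := by
    intro j
    by_contra hcon
    push_neg at hcon
    apply hr2 j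
    have : r j ∈ {s : R | ∀ x ∈ X (φ j), s • x = 0} := fun x hx => hcon x hx
    rw [← hX (φ j)] at this
    exact this
  choose x hxX hxne using hx
  refine ⟨fun j => f (φ j), x, r, fun a b hab => hmono (hφmono hab), hr1, hxne, ?_⟩
  intro j s hs
  have : s ∈ {t : R | ∀ x ∈ X (φ j), t • x = 0} := by rw [← hX (φ j)]; exact hs
  exact this (x j) (hxX j)

end Extract

section CoreA
variable {R : Type*} [Ring R] {M : Type*} [AddCommGroup M] [Module R M]

lemma coreA {ι : Type*} (e : ℕ → ι) (he : Injective e)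
    (h : IsSemiCompact R (ι →₀ M))
    (F : ℕ → Ideal R) (x : ℕ → M) (r : ℕ → R) (hF : Monotone F)
    (hr : ∀ j, r j ∈ F (j+1)) (hrx : ∀ j, r j • x j ≠ 0)
    (hkill : ∀ j, ∀ s ∈ F j, s • x j = 0) : False := by
  classical
  set w : ℕ → (ι →₀ M) := fun n => ∑ m ∈ Finset.range n, Finsupp.single (e m) (x m) with hw
  have key : ∀ {n' n : ℕ}, n' ≤ n → ∀ s ∈ F n', s • w n = s • w n' := by
    intro n' n hle s hs
    have : ∀ n₀, s • w n₀ = ∑ m ∈ Finset.range n₀, Finsupp.single (e m) (s • x m) := by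
      intro n₀
      rw [hw]
      rw [Finset.smul_sum]
      exact Finset.sum_congr rfl fun m _ => (Finsupp.smul_single s (e m) (x m))
    rw [this n, this n']
    refine (Finset.sum_subset (Finset.range_subset_range.2 hle) ?_).symm
    intro m _ hm
    rw [Finset.mem_range, not_lt] at hm
    rw [hkill m s (hF hm hs), Finsupp.single_zero]
  have hfin : ∀ t : Finset (ULift ℕ), ∃ y : ι →₀ M,
      ∀ α ∈ t, ∀ s ∈ F α.down, s • y = s • w α.down := by
    intro t
    refine ⟨w (t.sup fun a => a.down), fun α hα s hs => key (Finset.le_sup hα) s hs⟩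
  obtain ⟨y, hy⟩ := h (ULift ℕ) (fun α => w α.down) (fun α => F α.down) hfin
  have hy' : ∀ n : ℕ, ∀ s ∈ F n, s • y = s • w n := fun n => hy (ULift.up n)
  -- find a coordinate where y vanishes
  have hex : ∃ n : ℕ, y (e n) = 0 := by
    by_contra hcon
    push_neg at hcon
    have hsub : Set.range e ⊆ ↑y.support := by
      rintro _ ⟨n, rfl⟩
      exact Finsupp.mem_support_iff.2 (hcon n)
    exact (Set.infinite_range_of_injective he) (y.support.finite_toSet.subset hsub)
  obtain ⟨n, hn⟩ := hex
  have h1 : r n • y = r n • w (n+1) := hy' (n+1) (r n) (hr n)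
  have h2 : (r n • y) (e n) = 0 := by
    rw [Finsupp.smul_apply, hn, smul_zero]
  have h3 : (r n • w (n+1)) (e n) = r n • x n := by
    rw [Finsupp.smul_apply, hw]
    simp only
    rw [Finsupp.finset_sum_apply]
    rw [Finset.sum_eq_single_of_mem n (Finset.self_mem_range_succ n)]
    · rw [Finsupp.single_eq_same]
    · intro m _ hmn
      exact Finsupp.single_eq_of_ne' (fun hc => hmn (he hc))
  exact hrx n (by rw [← h3, ← h1, h2])

end CoreA

section CoreB
variable {R : Type*} [Ring R] {M : Type*} [AddCommGroup M] [Module R M]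

/-- Condition (3) of the theorem. -/
def Cond3 (R : Type*) [Ring R] (M : Type*) [AddCommGroup M] [Module R M] : Prop :=
  ∀ g : ℕ → AddSubgroup M,
    (∀ n, ∃ I : Ideal R, I.FG ∧ (g n : Set M) = {y : M | ∀ r ∈ I, r • y = 0}) →
    Antitone g → ∃ n, ∀ k, n ≤ k → g k = g n

lemma coe_torSub (I : Ideal R) : (torSub R M I : Set M) = {y : M | ∀ r ∈ I, r • y = 0} := rfl

lemma exists_min (h3 : Cond3 R M) (P : Set (AddSubgroup M))
    (hP : ∀ A ∈ P, ∃ I : Ideal R, I.FG ∧ A = torSub R M I)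
    (hne : P.Nonempty) : ∃ A ∈ P, ∀ B ∈ P, ¬ B < A := by
  by_contra hcon
  push_neg at hcon
  have step : ∀ A : P, ∃ B : P, (B : AddSubgroup M) < A := by
    rintro ⟨A, hA⟩
    obtain ⟨B, hB, hBA⟩ := hcon A hA
    exact ⟨⟨B, hB⟩, hBA⟩
  choose c hc using step
  obtain ⟨A₀, hA₀⟩ := hne
  let g : ℕ → P := fun n => c^[n] ⟨A₀, hA₀⟩
  have hgs : ∀ n, g (n+1) = c (g n) := fun n => Function.iterate_succ_apply' c n _
  have hglt : ∀ n, (g (n+1) : AddSubgroup M) < g n := fun n => by rw [hgs]; exact hc _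
  obtain ⟨n, hstab⟩ := h3 (fun n => (g n : AddSubgroup M))
    (fun n => by
      obtain ⟨I, hIfg, hI⟩ := hP (g n) (g n).2
      refine ⟨I, hIfg, ?_⟩
      show ((g n : AddSubgroup M) : Set M) = {y : M | ∀ r ∈ I, r • y = 0}
      rw [hI, coe_torSub])
    (antitone_nat_of_succ_le fun n => le_of_lt (hglt n))
  exact absurd (hstab (n+1) (Nat.le_succ n)) (ne_of_lt (hglt n))

lemma fg_reduce (h3 : Cond3 R M) (I : Ideal R) :
    ∃ J : Ideal R, J.FG ∧ J ≤ I ∧ torSub R M J = torSub R M I := by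
  classical
  set P : Set (AddSubgroup M) :=
    {A | ∃ J : Ideal R, J.FG ∧ J ≤ I ∧ A = torSub R M J} with hPdef
  obtain ⟨A, hA, hmin⟩ := exists_min h3 P
    (fun A hA => by obtain ⟨J, h1, _, h3'⟩ := hA; exact ⟨J, h1, h3'⟩)
    ⟨torSub R M ⊥, ⊥, Submodule.fg_bot, bot_le, rfl⟩
  obtain ⟨J, hJfg, hJI, rfl⟩ := hA
  refine ⟨J, hJfg, hJI, le_antisymm ?_ (torSub_anti R hJI)⟩
  intro y hy s hs
  -- enlarge J by s
  have hmem : torSub R M (J ⊔ Ideal.span {s}) ∈ P :=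
    ⟨J ⊔ Ideal.span {s}, Submodule.FG.sup hJfg (Submodule.fg_span_singleton s),
      sup_le hJI ((Ideal.span_singleton_le_iff_mem I).2 hs), rfl⟩
  have hle : torSub R M (J ⊔ Ideal.span {s}) ≤ torSub R M J := torSub_anti R le_sup_left
  have heq : torSub R M (J ⊔ Ideal.span {s}) = torSub R M J := by
    by_contra hne'
    exact hmin _ hmem (lt_of_le_of_ne hle hne')
  have : y ∈ torSub R M (J ⊔ Ideal.span {s}) := by rw [heq]; exact hy
  exact this s (le_sup_right (α := Ideal R) (Ideal.mem_span_singleton_self s))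

end CoreB

section MainB
variable {R : Type*} [Ring R] {M : Type*} [AddCommGroup M] [Module R M]

lemma torSub_finsetSup_le {Λ : Type*} (J : Λ → Ideal R) (S : Finset Λ) {y : M}
    (hy : ∀ β ∈ S, ∀ s ∈ J β, s • y = 0) : ∀ s ∈ S.sup J, s • y = 0 := by
  intro s hs
  have : S.sup J ≤ annSet R {y} := by
    refine Finset.sup_le fun β hβ => ?_
    intro t ht
    rw [mem_annSet]
    intro x hx
    rw [Set.mem_singleton_iff] at hx
    rw [hx]
    exact hy β hβ t ht
  have := this hs
  rw [mem_annSet] at this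
  exact this y rfl

lemma fg_finsetSup {Λ : Type*} (J : Λ → Ideal R) (hJ : ∀ α, (J α).FG) (S : Finset Λ) :
    (S.sup J).FG := by
  classical
  induction S using Finset.induction_on with
  | empty => rw [Finset.sup_empty]; exact Submodule.fg_bot
  | insert _ _ hnot ih => rw [Finset.sup_insert]; exact Submodule.FG.sup (hJ _) ih

lemma coreB (h3 : Cond3 R M) (ι : Type*) : IsSemiCompact R (ι →₀ M) := by
  classical
  intro Λ x I hfin
  -- replace each ideal by a finitely generated one with the same torsion subgroup
  choose J hJfg hJle hJtor using fun α => fg_reduce h3 (I α)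
  -- the family of torsion subgroups of finite sups has a minimal element
  obtain ⟨A, hA, hmin⟩ := exists_min h3 (Set.range fun S : Finset Λ => torSub R M (S.sup J))
    (by rintro _ ⟨S, rfl⟩; exact ⟨S.sup J, fg_finsetSup J hJfg S, rfl⟩)
    ⟨torSub R M ((∅ : Finset Λ).sup J), ∅, rfl⟩
  obtain ⟨S₀, rfl⟩ := hA
  have hminkey : ∀ α : Λ, torSub R M (S₀.sup J) ≤ torSub R M (J α) := by
    intro α
    have hle : torSub R M ((insert α S₀).sup J) ≤ torSub R M (S₀.sup J) :=
      torSub_anti R (Finset.sup_mono (Finset.subset_insert α S₀))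
    have heq : torSub R M ((insert α S₀).sup J) = torSub R M (S₀.sup J) := by
      by_contra hne
      exact hmin _ ⟨insert α S₀, rfl⟩ (lt_of_le_of_ne hle hne)
    rw [← heq]
    exact torSub_anti R (Finset.le_sup (Finset.mem_insert_self α S₀))
  -- pick a solution for the subsystem indexed by S₀
  obtain ⟨y₀, hy₀⟩ := hfin S₀
  refine ⟨y₀, fun α s hs => ?_⟩
  obtain ⟨y₁, hy₁⟩ := hfin (insert α S₀)
  have hd : ∀ i : ι, (y₀ - y₁) i ∈ torSub R M (S₀.sup J) := by
    intro i
    refine torSub_finsetSup_le J S₀ fun β hβ t ht => ?_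
    have h0 : t • y₀ = t • x β := hy₀ β hβ t (hJle β ht)
    have h1 : t • y₁ = t • x β := hy₁ β (Finset.mem_insert_of_mem hβ) t (hJle β ht)
    have : t • (y₀ - y₁) = 0 := by rw [smul_sub, h0, h1, sub_self]
    calc t • (y₀ - y₁) i = (t • (y₀ - y₁)) i := (Finsupp.smul_apply _ _ _).symm
      _ = 0 := by rw [this]; rfl
  -- hence y₀ - y₁ is annihilated by I α
  have hIα : ∀ i : ι, ∀ t ∈ I α, t • (y₀ - y₁) i = 0 := by
    intro i t ht
    have : (y₀ - y₁) i ∈ torSub R M (I α) := by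
      rw [← hJtor α]
      exact hminkey α (hd i)
    exact this t ht
  have hsol : s • (y₀ - y₁) = 0 := by
    ext i
    rw [Finsupp.smul_apply]
    exact hIα i s hs
  have h1 : s • y₁ = s • x α := hy₁ α (Finset.mem_insert_self α S₀) s hs
  have : s • y₀ - s • y₁ = 0 := by rw [← smul_sub, hsol]
  rw [sub_eq_zero] at this
  rw [this, h1]

end MainB


/-- For a left `R`-module `M`, the following are equivalent: (1) the countable direct sum
`M^(ℕ)` is semi-compact; (2) the left ideals of the form `^⊥X = {r | r • x = 0 ∀ x ∈ X}`
(`X ⊆ M`) satisfy the ascending chain condition; (3) `M` satisfies the descending chain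
condition on the subgroups `M[I]` with `I` a finitely generated left ideal; (4) `M` is
Σ-semi-compact. -/
theorem sigmaSemiCompact_tfae (R : Type*) [Ring R] (M : Type*)
    [AddCommGroup M] [Module R M] :
    List.TFAE [
      IsSemiCompact R (ℕ →₀ M),
      ∀ f : ℕ → Ideal R,
        (∀ n, ∃ X : Set M, (f n : Set R) = {r : R | ∀ x ∈ X, r • x = 0}) →
        Monotone f → ∃ n, ∀ k, n ≤ k → f k = f n,
      ∀ g : ℕ → AddSubgroup M,
        (∀ n, ∃ I : Ideal R, I.FG ∧ (g n : Set M) = {y : M | ∀ r ∈ I, r • y = 0}) →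
        Antitone g → ∃ n, ∀ k, n ≤ k → g k = g n,
      IsSigmaSemiCompact R M] := by
  tfae_have 1 → 2 := by
    intro h1 f hann hmono
    by_contra hns
    obtain ⟨F, x, r, hF, hr, hrx, hkill⟩ := extract_data f hann hmono hns
    exact coreA (fun n : ℕ => n) (fun a b h => h) h1 F x r hF hr hrx hkill
  tfae_have 2 → 3 := by
    intro h2 g hform hanti
    choose I hIfg hI using hform
    have hg : ∀ n, g n = torSub R M (annSet R (g n : Set M)) := by
      intro n
      refine le_antisymm (fun y hy s hs => (mem_annSet R).1 hs y hy) (fun y hy => ?_)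
      have : (y : M) ∈ {z : M | ∀ r ∈ I n, r • z = 0} := by
        intro s hs
        refine hy s ((mem_annSet R).2 fun z hz => ?_)
        have : (z : M) ∈ {w : M | ∀ r ∈ I n, r • w = 0} := by rw [← hI n]; exact hz
        exact this s hs
      rw [← hI n] at this
      exact this
    obtain ⟨n, hn⟩ := h2 (fun n => annSet R (g n : Set M))
      (fun n => ⟨(g n : Set M), by ext s; exact mem_annSet R⟩)
      (fun a b hab => by
        intro s hs
        rw [mem_annSet] at hs ⊢
        exact fun z hz => hs z (hanti hab hz))
    refine ⟨n, fun k hk => ?_⟩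
    rw [hg k, hg n, hn k hk]
  tfae_have 3 → 2 := by
    intro h3 f hann hmono
    by_contra hns
    obtain ⟨F, x, r, hF, hr, hrx, hkill⟩ := extract_data f hann hmono hns
    have hstrict : ∀ j, torSub R M (Ideal.span (Set.range fun i : Fin (j+1) => r i)) ≠
        torSub R M (Ideal.span (Set.range fun i : Fin j => r i)) := by
      intro j hEq
      have hxj : x j ∈ torSub R M (Ideal.span (Set.range fun i : Fin j => r i)) := by
        intro s hs
        refine hkill j s (Ideal.span_le.2 ?_ hs)
        rintro _ ⟨i, rfl⟩
        exact hF (Nat.succ_le_of_lt i.2) (hr i)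
      rw [← hEq] at hxj
      exact hrx j (hxj (r j) (Ideal.subset_span ⟨Fin.last j, rfl⟩))
    obtain ⟨n, hn⟩ := h3 (fun j => torSub R M (Ideal.span (Set.range fun i : Fin j => r i)))
      (fun j => ⟨Ideal.span (Set.range fun i : Fin j => r i),
        Submodule.fg_span (Set.finite_range _), rfl⟩)
      (fun a b hab => torSub_anti R (Ideal.span_mono (by
        rintro _ ⟨i, rfl⟩
        exact ⟨⟨i.1, lt_of_lt_of_le i.2 hab⟩, rfl⟩)))
    exact hstrict n (by rw [hn (n+1) (Nat.le_succ n), hn n le_rfl])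
  tfae_have 3 → 1 := fun h3 => coreB h3 ℕ
  tfae_have 3 → 4 := fun h3 ι => coreB h3 ι
  tfae_have 4 → 2 := by
    intro h4 f hann hmono
    by_contra hns
    obtain ⟨F, x, r, hF, hr, hrx, hkill⟩ := extract_data f hann hmono hns
    exact coreA (fun n : ℕ => ULift.up n) (fun a b h => congrArg ULift.down h)
      (h4 (ULift ℕ)) F x r hF hr hrx hkill
  tfae_finish
end

section
/- Let R be a ring, M a left R-module, and N a submodule of M. If M is Σ-semi-compact, then N is Σ-semi-compact. -/
/-- The left ideal of elements of `R` annihilating a fixed `x : M`. -/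
def killerIdeal {R : Type*} [Ring R] {M : Type*} [AddCommGroup M] [Module R M]
    (x : M) : Ideal R where
  carrier := {r | r • x = 0}
  add_mem' := by
    intro a b ha hb
    simp only [Set.mem_setOf_eq] at *
    rw [add_smul, ha, hb, add_zero]
  zero_mem' := by simp
  smul_mem' := by
    intro c r hr
    simp only [Set.mem_setOf_eq, smul_eq_mul] at *
    rw [mul_smul, hr, smul_zero]

theorem kill_sup_iff {R : Type*} [Ring R] {M : Type*} [AddCommGroup M] [Module R M]
    {Λ : Type*} (F : Finset Λ) (I : Λ → Ideal R) (x : M) :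
    (∀ r ∈ F.sup I, r • x = 0) ↔ ∀ α ∈ F, ∀ r ∈ I α, r • x = 0 := by
  constructor
  · intro h α hα r hr
    have hle : I α ≤ F.sup I := Finset.le_sup hα
    exact h r (hle hr)
  · intro h r hr
    have hle : F.sup I ≤ killerIdeal x := Finset.sup_le fun α hα t ht => h α hα t ht
    exact hle hr

/-- The chain condition: along any increasing chain of left ideals `J n`, the annihilator
subgroups `M[J n]` eventually stop decreasing at some step. -/
def ChainCond (R : Type*) [Ring R] (M : Type*) [AddCommGroup M] [Module R M] : Prop :=
  ∀ J : ℕ → Ideal R, Monotone J →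
    ∃ n, ∀ x : M, (∀ r ∈ J n, r • x = 0) → ∀ r ∈ J (n + 1), r • x = 0

section lemmas

universe s u v w

variable {R : Type u} [Ring R]

/-- A Σ-semi-compact module satisfies the chain condition. -/
theorem sigma_chainCond {M : Type v} [AddCommGroup M] [Module R M]
    (hM : IsSigmaSemiCompact.{s, u, v, w} R M) : ChainCond R M := by
  classical
  intro J hJ
  by_contra h
  push_neg at h
  choose m hm1 r0 hr0 hr0' using h
  -- m n annihilated by J n but not by J (n+1)
  set xx : ULift.{s} ℕ → (ULift.{w} ℕ →₀ M) := fun a =>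
    ∑ k ∈ Finset.range a.down, Finsupp.single (ULift.up k) (m k) with hxx
  have key : ∀ a b : ℕ, a ≤ b → ∀ r ∈ J a,
      r • (xx (ULift.up b)) = r • (xx (ULift.up a)) := by
    intro a b hab r hr
    rw [hxx]
    simp only [Finset.smul_sum, Finsupp.smul_single]
    refine (Finset.sum_subset (Finset.range_subset_range.2 hab) ?_).symm
    intro k hk hk'
    simp only [Finset.mem_range, not_lt] at hk'
    rw [hm1 k r (hJ hk' hr), Finsupp.single_zero]
  have hsolv : ∀ t : Finset (ULift.{s} ℕ), ∃ y : ULift.{w} ℕ →₀ M,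
      ∀ α ∈ t, ∀ r ∈ J α.down, r • y = r • xx α := by
    intro t
    refine ⟨xx (ULift.up (t.sup ULift.down)), fun α hα r hr => ?_⟩
    obtain ⟨a⟩ := α
    exact key a (t.sup ULift.down) (Finset.le_sup (f := ULift.down) hα) r hr
  obtain ⟨y, hy⟩ := hM (ULift.{w} ℕ) (ULift.{s} ℕ) xx (fun a => J a.down) hsolv
  · set n : ℕ := (y.support.sup ULift.down) + 1 with hn
    have hy0 : y (ULift.up n) = 0 := by
      rw [← Finsupp.notMem_support_iff]
      intro hmem
      have : n ≤ y.support.sup ULift.down := Finset.le_sup (f := ULift.down) hmem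
      omega
    have hcoord : (xx (ULift.up (n + 1))) (ULift.up n) = m n := by
      rw [hxx]
      rw [Finsupp.finset_sum_apply]
      rw [Finset.sum_eq_single_of_mem n (Finset.self_mem_range_succ n)
        (fun k _ hkn => Finsupp.single_eq_of_ne'
          (fun h => hkn (congrArg ULift.down h))), Finsupp.single_eq_same]
    have h1 := hy (ULift.up (n + 1)) (r0 n) (hr0 n)
    have h2 := congrArg (fun f : ULift.{w} ℕ →₀ M => f (ULift.up n)) h1
    simp only [Finsupp.smul_apply, hy0, smul_zero, hcoord] at h2
    exact hr0' n h2.symm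

theorem chainCond_submodule {M : Type v} [AddCommGroup M] [Module R M]
    (hc : ChainCond R M) (N : Submodule R M) : ChainCond R N := by
  intro J hJ
  obtain ⟨n, hn⟩ := hc J hJ
  refine ⟨n, fun x hx r hr => ?_⟩
  have : r • (x : M) = 0 := by
    refine hn (x : M) (fun r hr => ?_) r hr
    have := hx r hr
    exact_mod_cast congrArg Subtype.val this
  exact Subtype.ext this

theorem chainCond_finsupp {M : Type v} [AddCommGroup M] [Module R M]
    (hc : ChainCond R M) (ι : Type w) : ChainCond R (ι →₀ M) := by
  intro J hJ
  obtain ⟨n, hn⟩ := hc J hJ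
  refine ⟨n, fun x hx r hr => ?_⟩
  ext i
  have h1 : ∀ r ∈ J n, r • (x i) = 0 := by
    intro r hr
    have h2 := hx r hr
    calc r • x i = (r • x) i := (Finsupp.smul_apply _ _ _).symm
    _ = 0 := by rw [h2]; rfl
  have := hn (x i) h1 r hr
  rw [Finsupp.smul_apply, this]
  rfl

/-- The chain condition implies semi-compactness. -/
theorem chainCond_isSemiCompact {M : Type v} [AddCommGroup M] [Module R M]
    (hc : ChainCond R M) : IsSemiCompact.{u, v, s} R M := by
  classical
  intro Λ x I hfin
  by_cases hstab : ∃ F₀ : Finset Λ, ∀ F : Finset Λ, ∀ e : M,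
      (∀ α ∈ F₀, ∀ r ∈ I α, r • e = 0) → (∀ α ∈ F, ∀ r ∈ I α, r • e = 0)
  · obtain ⟨F₀, hF₀⟩ := hstab
    obtain ⟨y, hy⟩ := hfin F₀
    refine ⟨y, fun α r hr => ?_⟩
    obtain ⟨z, hz⟩ := hfin (insert α F₀)
    have hdiff : ∀ β ∈ F₀, ∀ r ∈ I β, r • (y - z) = 0 := by
      intro β hβ r hr
      rw [smul_sub, hy β hβ r hr, hz β (Finset.mem_insert_of_mem hβ) r hr, sub_self]
    have h0 : r • (y - z) = 0 :=
      hF₀ {α} (y - z) hdiff α (Finset.mem_singleton_self α) r hr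
    have hz' := hz α (Finset.mem_insert_self α F₀) r hr
    rw [smul_sub, sub_eq_zero] at h0
    rw [h0, hz']
  · exfalso
    push_neg at hstab
    choose G E hE1 β hβG r hrI hne using hstab
    set Fs : ℕ → Finset Λ := fun n => Nat.rec ∅ (fun _ F => F ∪ G F) n with hFs
    have hFsucc : ∀ n, Fs (n + 1) = Fs n ∪ G (Fs n) := fun n => rfl
    have hFmono : ∀ n, Fs n ⊆ Fs (n + 1) := fun n => by
      rw [hFsucc]; exact Finset.subset_union_left
    set J : ℕ → Ideal R := fun n => (Fs n).sup I with hJdef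
    have hJmono : Monotone J := monotone_nat_of_le_succ fun n =>
      Finset.sup_mono (hFmono n)
    obtain ⟨n, hn⟩ := hc J hJmono
    have h1 : ∀ r ∈ J n, r • E (Fs n) = 0 :=
      (kill_sup_iff (Fs n) I (E (Fs n))).2 (hE1 (Fs n))
    have h2 : ∀ α ∈ Fs (n + 1), ∀ r ∈ I α, r • E (Fs n) = 0 :=
      (kill_sup_iff (Fs (n + 1)) I (E (Fs n))).1 (hn _ h1)
    exact hne (Fs n) (h2 (β (Fs n))
      (by rw [hFsucc]; exact Finset.mem_union_right _ (hβG (Fs n)))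
      (r (Fs n)) (hrI (Fs n)))

end lemmas

/-- Every submodule of a Σ-semi-compact module is Σ-semi-compact. -/
theorem isSigmaSemiCompact_submodule (R : Type*) [Ring R] (M : Type*)
    [AddCommGroup M] [Module R M] (N : Submodule R M)
    (hM : IsSigmaSemiCompact R M) : IsSigmaSemiCompact R N := by
  intro ι
  exact chainCond_isSemiCompact (chainCond_finsupp (chainCond_submodule (sigma_chainCond hM) N) ι)
end

section
/- Let R be a ring. The following conditions are equivalent: (1) R satisfies the ascending chain condition on left annulets, i.e. on left ideals of the form ^⊥X = {r ∈ R | r·x = 0 for all x ∈ X} with X a subset of R; (2) R satisfies the descending chain condition on right annulets, i.e. on right ideals of the form X^⊥ = {r ∈ R | x·r = 0 for all x ∈ X} with X a subset of R; (3) R is Σ-semi-compact as a left R-module. -/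
namespace SSC

variable {R : Type*} [Ring R]

def lAnn (X : Set R) : Set R := {r : R | ∀ x ∈ X, r * x = 0}
def rAnn (X : Set R) : Set R := {r : R | ∀ x ∈ X, x * r = 0}

theorem lAnn_anti {X Y : Set R} (h : X ⊆ Y) : lAnn Y ⊆ lAnn X :=
  fun _ hr x hx => hr x (h hx)

theorem rAnn_anti {X Y : Set R} (h : X ⊆ Y) : rAnn Y ⊆ rAnn X :=
  fun _ hr x hx => hr x (h hx)

theorem subset_lAnn_rAnn (X : Set R) : X ⊆ lAnn (rAnn X) :=
  fun x hx _ ht => ht x hx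

theorem subset_rAnn_lAnn (X : Set R) : X ⊆ rAnn (lAnn X) :=
  fun x hx _ ht => ht x hx

theorem lAnn_rAnn_lAnn (X : Set R) : lAnn (rAnn (lAnn X)) = lAnn X :=
  le_antisymm (lAnn_anti (subset_rAnn_lAnn X)) (subset_lAnn_rAnn (lAnn X))

theorem rAnn_lAnn_rAnn (X : Set R) : rAnn (lAnn (rAnn X)) = rAnn X :=
  le_antisymm (rAnn_anti (subset_lAnn_rAnn X)) (subset_rAnn_lAnn (rAnn X))

def lAnnIdeal (X : Set R) : Ideal R where
  carrier := lAnn X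
  add_mem' := by
    intro a b ha hb x hx
    rw [add_mul, ha x hx, hb x hx, add_zero]
  zero_mem' := fun x _ => zero_mul x
  smul_mem' := by
    intro c a ha x hx
    simp only [smul_eq_mul, mul_assoc, ha x hx, mul_zero]

theorem one_to_two
    (h1 : ∀ f : ℕ → Set R, (∀ n, ∃ X : Set R, f n = lAnn X) →
      Monotone f → ∃ n, ∀ k, n ≤ k → f k = f n)
    (f : ℕ → Set R) (hann : ∀ n, ∃ X : Set R, f n = rAnn X) (hanti : Antitone f) :
    ∃ n, ∀ k, n ≤ k → f k = f n := by
  obtain ⟨n, hn⟩ := h1 (fun n => lAnn (f n)) (fun n => ⟨f n, rfl⟩)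
    (fun a b hab => lAnn_anti (hanti hab))
  refine ⟨n, fun k hk => ?_⟩
  obtain ⟨Xk, hXk⟩ := hann k
  obtain ⟨Xn, hXn⟩ := hann n
  have hk' : f k = rAnn (lAnn (f k)) := by rw [hXk, rAnn_lAnn_rAnn]
  have hn' : f n = rAnn (lAnn (f n)) := by rw [hXn, rAnn_lAnn_rAnn]
  rw [hk', hn', hn k hk]

theorem two_to_one
    (h2 : ∀ f : ℕ → Set R, (∀ n, ∃ X : Set R, f n = rAnn X) →
      Antitone f → ∃ n, ∀ k, n ≤ k → f k = f n)
    (f : ℕ → Set R) (hann : ∀ n, ∃ X : Set R, f n = lAnn X) (hmono : Monotone f) :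
    ∃ n, ∀ k, n ≤ k → f k = f n := by
  obtain ⟨n, hn⟩ := h2 (fun n => rAnn (f n)) (fun n => ⟨f n, rfl⟩)
    (fun a b hab => rAnn_anti (hmono hab))
  refine ⟨n, fun k hk => ?_⟩
  obtain ⟨Xk, hXk⟩ := hann k
  obtain ⟨Xn, hXn⟩ := hann n
  have hk' : f k = lAnn (rAnn (f k)) := by rw [hXk, lAnn_rAnn_lAnn]
  have hn' : f n = lAnn (rAnn (f n)) := by rw [hXn, lAnn_rAnn_lAnn]
  rw [hk', hn', hn k hk]

theorem one_to_three.{s, u, w} {R : Type u} [Ring R]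
    (h1 : ∀ f : ℕ → Set R, (∀ n, ∃ X : Set R, f n = lAnn X) →
      Monotone f → ∃ n, ∀ k, n ≤ k → f k = f n) :
    IsSigmaSemiCompact.{s, u, u, w} R R := by
  intro ι Λ x I hfin
  classical
  set U : Finset Λ → Set R := fun S => {t | ∃ α ∈ S, t ∈ I α} with hU
  have key : ∃ S₀ : Finset Λ, ∀ β : Λ, rAnn (U S₀) ⊆ rAnn (I β : Set R) := by
    by_contra hno
    push_neg at hno
    choose c hc using hno
    set T : ℕ → Finset Λ := fun n => Nat.rec ∅ (fun _ T => insert (c T) T) n with hT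
    have hTsucc : ∀ n, T (n + 1) = insert (c (T n)) (T n) := fun n => rfl
    have hUmono : ∀ n, U (T n) ⊆ U (T (n + 1)) := by
      rintro n t ⟨α, hα, ht⟩
      exact ⟨α, by rw [hTsucc]; exact Finset.mem_insert_of_mem hα, ht⟩
    obtain ⟨n, hn⟩ := h1 (fun n => lAnn (rAnn (U (T n))))
      (fun n => ⟨rAnn (U (T n)), rfl⟩)
      (monotone_nat_of_le_succ fun n => lAnn_anti (rAnn_anti (hUmono n)))
    have heq : rAnn (U (T (n + 1))) = rAnn (U (T n)) := by
      have h := congrArg rAnn (hn (n + 1) (Nat.le_succ n))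
      rwa [rAnn_lAnn_rAnn, rAnn_lAnn_rAnn] at h
    refine hc (T n) ?_
    rw [← heq]
    refine rAnn_anti ?_
    intro t ht
    exact ⟨c (T n), by rw [hTsucc]; exact Finset.mem_insert_self _ _, ht⟩
  obtain ⟨S₀, hS₀⟩ := key
  obtain ⟨y₀, hy₀⟩ := hfin S₀
  refine ⟨y₀, fun β r hr => ?_⟩
  obtain ⟨y₁, hy₁⟩ := hfin (insert β S₀)
  ext j
  simp only [Finsupp.smul_apply, smul_eq_mul]
  have hsub : (y₀ j - y₁ j) ∈ rAnn (U S₀) := by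
    rintro t ⟨α, hα, ht⟩
    have e0 : (t • y₀) j = (t • x α) j := by rw [hy₀ α hα t ht]
    have e1 : (t • y₁) j = (t • x α) j := by
      rw [hy₁ α (Finset.mem_insert_of_mem hα) t ht]
    simp only [Finsupp.smul_apply, smul_eq_mul] at e0 e1
    rw [mul_sub, e0, e1, sub_self]
  have hrr : r * (y₀ j - y₁ j) = 0 := hS₀ β hsub r hr
  rw [mul_sub, sub_eq_zero] at hrr
  have e2 : (r • y₁) j = (r • x β) j := by
    rw [hy₁ β (Finset.mem_insert_self β S₀) r hr]
  simp only [Finsupp.smul_apply, smul_eq_mul] at e2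
  rw [hrr, e2]

theorem three_to_one.{s, u, w} {R : Type u} [Ring R]
    (h3 : IsSigmaSemiCompact.{s, u, u, w} R R)
    (f : ℕ → Set R) (hann : ∀ n, ∃ X : Set R, f n = lAnn X) (hmono : Monotone f) :
    ∃ n, ∀ k, n ≤ k → f k = f n := by
  classical
  by_contra hcon
  push_neg at hcon
  choose c hc1 hc2 using hcon
  set nn : ℕ → ℕ := fun j => c^[j] 0 with hnn
  have hstep : ∀ j, nn (j + 1) = c (nn j) := fun j => Function.iterate_succ_apply' c j 0
  have hle : ∀ j, nn j ≤ nn (j + 1) := fun j => by rw [hstep]; exact hc1 (nn j)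
  have hnmono : Monotone nn := monotone_nat_of_le_succ hle
  choose X hX using hann
  have hssub : ∀ j, ∃ t, t ∈ f (nn (j + 1)) ∧ t ∉ f (nn j) := by
    intro j
    have hsub : f (nn j) ⊆ f (nn (j + 1)) := hmono (hle j)
    have hne : f (nn (j + 1)) ≠ f (nn j) := by rw [hstep]; exact hc2 (nn j)
    obtain ⟨t, ht1, ht2⟩ := Set.exists_of_ssubset (hsub.ssubset_of_ne hne.symm)
    exact ⟨t, ht1, ht2⟩
  choose rr hrr1 hrr2 using hssub
  have ha : ∀ j, ∃ b, b ∈ X (nn j) ∧ rr j * b ≠ 0 := by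
    intro j
    by_contra h'
    push_neg at h'
    exact hrr2 j (by rw [hX (nn j)]; intro b hb; exact h' b hb)
  choose aa haa1 haa2 using ha
  have F : ∀ (s : R) (m k : ℕ), m ≤ k → s ∈ f (nn m) → s * aa k = 0 := by
    intro s m k hmk hs
    have hs' : s ∈ f (nn k) := hmono (hnmono hmk) hs
    rw [hX (nn k)] at hs'
    exact hs' (aa k) (haa1 k)
  set xx : ULift.{s} ℕ → (ULift.{w} ℕ →₀ R) := fun m =>
    Finsupp.onFinset
      ((Finset.range (m.down + 1)).map ⟨ULift.up, fun a b h => congrArg ULift.down h⟩)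
      (fun j => if j.down ≤ m.down then aa j.down else 0)
      (by
        intro j hj
        simp only [Finset.mem_map, Finset.mem_range, Function.Embedding.coeFn_mk]
        by_cases h : j.down ≤ m.down
        · exact ⟨j.down, Nat.lt_succ_of_le h, rfl⟩
        · simp [h] at hj) with hxx
  have hxapp : ∀ (m : ULift.{s} ℕ) (j : ULift.{w} ℕ),
      xx m j = if j.down ≤ m.down then aa j.down else 0 := fun m j => rfl
  set II : ULift.{s} ℕ → Ideal R := fun m => lAnnIdeal (X (nn m.down)) with hII
  have hImem : ∀ (m : ULift.{s} ℕ) (r : R), r ∈ II m ↔ r ∈ f (nn m.down) := by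
    intro m r
    rw [hX (nn m.down)]
    exact Iff.rfl
  have hfin : ∀ s : Finset (ULift.{s} ℕ), ∃ y, ∀ α ∈ s, ∀ r ∈ II α, r • y = r • xx α := by
    intro s
    refine ⟨xx ⟨s.sup ULift.down⟩, fun α hα r hrI => ?_⟩
    have hαle : α.down ≤ s.sup ULift.down := Finset.le_sup hα
    have hrf : r ∈ f (nn α.down) := (hImem α r).1 hrI
    ext j
    simp only [Finsupp.smul_apply, smul_eq_mul, hxapp]
    by_cases h1 : j.down ≤ α.down
    · rw [if_pos h1, if_pos (h1.trans hαle)]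
    · rw [if_neg h1, mul_zero]
      by_cases h2 : j.down ≤ s.sup ULift.down
      · rw [if_pos h2]
        exact F r α.down j.down (le_of_not_ge h1) hrf
      · rw [if_neg h2, mul_zero]
  obtain ⟨y, hy⟩ := h3 (ULift.{w} ℕ) (ULift.{s} ℕ) xx II hfin
  set N : ℕ := (y.support.sup ULift.down) + 1 with hN
  have hyN : y ⟨N⟩ = 0 := by
    by_contra h'
    have hmem : (⟨N⟩ : ULift.{w} ℕ) ∈ y.support := Finsupp.mem_support_iff.2 h'
    have hle' : N ≤ y.support.sup ULift.down := Finset.le_sup (f := ULift.down) hmem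
    omega
  have hrmem : rr N ∈ II ⟨N + 1⟩ := (hImem ⟨N + 1⟩ (rr N)).2 (hrr1 N)
  have hcong := hy ⟨N + 1⟩ (rr N) hrmem
  have hcomp := DFunLike.congr_fun hcong (⟨N⟩ : ULift.{w} ℕ)
  simp only [Finsupp.smul_apply, smul_eq_mul, hxapp] at hcomp
  rw [hyN, mul_zero, if_pos (Nat.le_succ N)] at hcomp
  exact haa2 N hcomp.symm

end SSC

/-- For a ring `R`, the following are equivalent: (1) `R` satisfies the ascending chain
condition on left annulets `^⊥X = {r | r * x = 0 ∀ x ∈ X}` (`X ⊆ R`); (2) `R` satisfies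
the descending chain condition on right annulets `X^⊥ = {r | x * r = 0 ∀ x ∈ X}`;
(3) `R` is Σ-semi-compact as a left `R`-module. -/
theorem sigmaSemiCompact_ring_tfae (R : Type*) [Ring R] :
    List.TFAE [
      ∀ f : ℕ → Set R,
        (∀ n, ∃ X : Set R, f n = {r : R | ∀ x ∈ X, r * x = 0}) →
        Monotone f → ∃ n, ∀ k, n ≤ k → f k = f n,
      ∀ f : ℕ → Set R,
        (∀ n, ∃ X : Set R, f n = {r : R | ∀ x ∈ X, x * r = 0}) →
        Antitone f → ∃ n, ∀ k, n ≤ k → f k = f n,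
      IsSigmaSemiCompact R R] := by
  tfae_have 1 → 3 := SSC.one_to_three
  tfae_have 3 → 1 := SSC.three_to_one
  tfae_have 1 → 2 := SSC.one_to_two
  tfae_have 2 → 1 := SSC.two_to_one
  tfae_finish
end

section
/- Let R be a ring which is a subring of a left Noetherian ring S (i.e. there is an injective ring homomorphism R → S with S left Noetherian). Then every flat left R-module is semi-compact. -/
/-- Flatness of a left module over an arbitrary (possibly noncommutative) ring: the tensor
functor with `M` preserves injections. This is expressed by the standard equational
criterion (equivalent to Mathlib's `Module.Flat` in the commutative case): every finite
system of relations `∑ i, r j i • x i = 0` in `M` comes from relations in `R`. -/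
def IsFlatModule (R : Type*) [Ring R] (M : Type*) [AddCommGroup M] [Module R M] : Prop :=
  ∀ (m n : ℕ) (r : Fin m → Fin n → R) (x : Fin n → M),
    (∀ j, ∑ i, r j i • x i = 0) →
    ∃ (k : ℕ) (a : Fin n → Fin k → R) (y : Fin k → M),
      (∀ i, x i = ∑ l, a i l • y l) ∧ ∀ j l, ∑ i, r j i * a i l = 0

/-- Right annihilator of a set in a ring, as a set. -/
def myRAnn {S : Type*} [Ring S] (X : Set S) : Set S := {a | ∀ x ∈ X, x * a = 0}

/-- Left annihilator of a set in a ring, as a left ideal. -/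
def myLAnn {S : Type*} [Ring S] (Y : Set S) : Ideal S where
  carrier := {x | ∀ a ∈ Y, x * a = 0}
  add_mem' := by intro x y hx hy a ha; rw [add_mul, hx a ha, hy a ha, add_zero]
  zero_mem' := by intro a _; rw [zero_mul]
  smul_mem' := by
    intro c x hx a ha
    show (c * x) * a = 0
    rw [mul_assoc, hx a ha, mul_zero]

lemma myRAnn_antitone {S : Type*} [Ring S] {X Y : Set S} (h : X ⊆ Y) :
    myRAnn Y ⊆ myRAnn X := fun a ha x hx => ha x (h hx)

lemma myLAnn_antitone {S : Type*} [Ring S] {X Y : Set S} (h : X ⊆ Y) :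
    myLAnn Y ≤ myLAnn X := fun x hx a ha => hx a (h ha)

lemma myRAnn_lAnn_rAnn {S : Type*} [Ring S] (X : Set S) :
    myRAnn ((myLAnn (myRAnn X) : Ideal S) : Set S) = myRAnn X := by
  apply Set.Subset.antisymm
  · exact myRAnn_antitone (fun x hx a ha => ha x hx)
  · intro a ha t ht
    exact ht a ha

/-- The main argument, for families of finitely generated ideals. -/
theorem aux_semicompact (R S : Type*) [Ring R] [Ring S] (f : R →+* S)
    (hf : Function.Injective f) (hS : IsNoetherianRing S)
    (M : Type*) [AddCommGroup M] [Module R M] (hM : IsFlatModule R M)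
    (Λ : Type*) (x : Λ → M) (I : Λ → Ideal R) (hfg : ∀ α, (I α).FG)
    (h : ∀ s : Finset Λ, ∃ y : M, ∀ α ∈ s, ∀ r ∈ I α, r • y = r • x α) :
    ∃ y : M, ∀ α, ∀ r ∈ I α, r • y = r • x α := by
  classical
  choose T hT using hfg
  set X : Finset Λ → Set S := fun F => ⋃ α ∈ F, f '' (I α : Set R) with hX
  have hXmono : ∀ {F F' : Finset Λ}, F ⊆ F' → X F ⊆ X F' := by
    intro F F' hFF'
    exact Set.biUnion_subset_biUnion_left (fun α hα => hFF' hα)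
  set g : Finset Λ → Ideal S := fun F => myLAnn (myRAnn (X F)) with hg
  have hgmono : ∀ {F F' : Finset Λ}, F ⊆ F' → g F ≤ g F' := by
    intro F F' hFF'
    exact myLAnn_antitone (myRAnn_antitone (hXmono hFF'))
  obtain ⟨J, hJmem, hJmax⟩ := set_has_maximal_iff_noetherian.mpr hS (Set.range g)
    ⟨g ∅, Set.mem_range_self _⟩
  obtain ⟨F₀, rfl⟩ := hJmem
  -- key annihilator stability
  have hgeq : ∀ β : Λ, g (insert β F₀) = g F₀ := by
    intro β
    exact ((hgmono (Finset.subset_insert β F₀)).lt_or_eq.resolve_left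
      (hJmax _ ⟨_, rfl⟩)).symm
  have key : ∀ β : Λ, ∀ a : S, a ∈ myRAnn (X F₀) → ∀ r ∈ I β, f r * a = 0 := by
    intro β a ha r hr
    have h1 : myRAnn (X (insert β F₀)) = myRAnn (X F₀) := by
      rw [← myRAnn_lAnn_rAnn (X (insert β F₀)), ← myRAnn_lAnn_rAnn (X F₀)]
      show myRAnn ((g (insert β F₀) : Ideal S) : Set S) = myRAnn ((g F₀ : Ideal S) : Set S)
      rw [hgeq β]
    have : a ∈ myRAnn (X (insert β F₀)) := h1.symm ▸ ha
    refine this (f r) ?_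
    refine Set.mem_biUnion (Finset.mem_insert_self β F₀) ⟨r, hr, rfl⟩
  -- flat step
  have flatstep : ∀ m : M, (∀ γ ∈ F₀, ∀ r ∈ I γ, r • m = 0) →
      ∀ β : Λ, ∀ s ∈ I β, s • m = 0 := by
    intro m hm β s hs
    set G : Finset R := F₀.biUnion T with hG
    have hGann : ∀ r' ∈ G, r' • m = 0 := by
      intro r' hr'
      obtain ⟨γ, hγ, hr'⟩ := Finset.mem_biUnion.mp hr'
      refine hm γ hγ r' ?_
      rw [← hT γ]
      exact Ideal.subset_span hr'
    set e : Fin G.card → R := fun j => ((G.equivFin.symm j : G) : R) with he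
    obtain ⟨k, a, y, hmy, hrel⟩ := hM G.card 1 (fun j _ => e j) (fun _ => m)
      (by intro j; rw [Fin.sum_univ_one]; exact hGann (e j) (G.equivFin.symm j).2)
    have hann : ∀ l, ∀ r' ∈ G, r' * a 0 l = 0 := by
      intro l r' hr'
      have := hrel (G.equivFin ⟨r', hr'⟩) l
      rw [Fin.sum_univ_one] at this
      simpa [he, Equiv.symm_apply_apply] using this
    have hannβ : ∀ l, s * a 0 l = 0 := by
      intro l
      have hmem : f (a 0 l) ∈ myRAnn (X F₀) := by
        intro t ht
        simp only [hX, Set.mem_iUnion] at ht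
        obtain ⟨γ, hγ, r', hr', rfl⟩ := ht
        rw [← map_mul]
        have hstep : ∀ u ∈ Ideal.span (↑(T γ) : Set R), u * a 0 l = 0 := by
          intro u hu
          induction hu using Submodule.span_induction with
          | mem u hu => exact hann l u (Finset.mem_biUnion.mpr ⟨γ, hγ, hu⟩)
          | zero => rw [zero_mul]
          | add u v _ _ hu hv => rw [add_mul, hu, hv, add_zero]
          | smul c u _ hu => show (c * u) * a 0 l = 0; rw [mul_assoc, hu, mul_zero]
        rw [hstep r' ((hT γ) ▸ hr'), map_zero]
      have := key β (f (a 0 l)) hmem s hs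
      rw [← map_mul] at this
      exact hf (by rw [this, map_zero])
    rw [hmy 0, Finset.smul_sum]
    refine Finset.sum_eq_zero (fun l _ => ?_)
    rw [smul_smul, hannβ l, zero_smul]
  -- assemble
  obtain ⟨y, hy⟩ := h F₀
  refine ⟨y, fun α s hs => ?_⟩
  obtain ⟨z, hz⟩ := h (insert α F₀)
  have hmz : ∀ γ ∈ F₀, ∀ r ∈ I γ, r • (y - z) = 0 := by
    intro γ hγ r hr
    rw [smul_sub, hy γ hγ r hr, ← hz γ (Finset.mem_insert_of_mem hγ) r hr, sub_self]
  have h0 := flatstep (y - z) hmz α s hs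
  rw [smul_sub, sub_eq_zero] at h0
  rw [h0, hz α (Finset.mem_insert_self α F₀) s hs]

/-- If `R` is a subring of a left Noetherian ring `S` (i.e. there is an injective ring
homomorphism `R → S` with `S` left Noetherian), then every flat left `R`-module is
semi-compact. -/
theorem flat_isSemiCompact_of_subring_noetherian (R S : Type*) [Ring R] [Ring S]
    (f : R →+* S) (hf : Function.Injective f) (hS : IsNoetherianRing S)
    (M : Type*) [AddCommGroup M] [Module R M] (hM : IsFlatModule R M) :
    IsSemiCompact R M := by
  intro Λ x I hfin
  classical
  obtain ⟨y, hy⟩ := aux_semicompact R S f hf hS M hM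
    ((α : Λ) × {s : Finset R // (↑s : Set R) ⊆ (I α : Set R)})
    (fun p => x p.1) (fun p => Ideal.span (↑p.2.1 : Set R))
    (fun p => ⟨p.2.1, rfl⟩)
    (by
      intro s'
      obtain ⟨y, hy⟩ := hfin (s'.image Sigma.fst)
      refine ⟨y, fun p hp r hr => ?_⟩
      exact hy p.1 (Finset.mem_image_of_mem Sigma.fst hp) r (Ideal.span_le.mpr p.2.2 hr))
  refine ⟨y, fun α r hr => ?_⟩
  exact hy ⟨α, ⟨{r}, by simpa using hr⟩⟩ r
    (by simpa using Ideal.subset_span (Set.mem_singleton r))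
end
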